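/- Let X be a Hausdorff space containing two disjoint subsets A and B such that every infinite subset of X has a limit point in A and also a limit point in B. Then X is Stäckel-compact: ordering X with A well-ordered first, followed by X \ A reverse well-ordered, gives a linear order in which every non-empty closed subset has a least and a greatest element. -/

import Mathlib

open Filter

/-- Let X be Hausdorff with disjoint subsets A and B such that every infinite subset of X
has a limit point in A and a limit point in B.  Then X is Stäckel-compact: there is a
linear order in which A comes first and is well-ordered, X \ A comes after and is
reverse well-ordered, and every non-empty closed set has a least and greatest element. -/
theorem stackelCompact_of_disjoint_limit_sets {X : Type*} [TopologicalSpace X]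
    [T2Space X] (A B : Set X) (hdisj : Disjoint A B)
    (hlim : ∀ S : Set X, S.Infinite →
      (∃ a ∈ A, AccPt a (𝓟 S)) ∧ (∃ b ∈ B, AccPt b (𝓟 S))) :
    ∃ r : X → X → Prop, IsLinearOrder X r ∧
      (∀ a ∈ A, ∀ x ∈ Aᶜ, r a x) ∧
      (∀ S : Set X, S ⊆ A → S.Nonempty → ∃ a ∈ S, ∀ x ∈ S, r a x) ∧
      (∀ S : Set X, S ⊆ Aᶜ → S.Nonempty → ∃ b ∈ S, ∀ x ∈ S, r x b) ∧
      (∀ F : Set X, IsClosed F → F.Nonempty →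
        (∃ a ∈ F, ∀ x ∈ F, r a x) ∧ (∃ b ∈ F, ∀ x ∈ F, r x b)) := by
  classical
  -- An accumulation point of a closed set belongs to it.
  have hacc_mem : ∀ (F : Set X) (x : X), IsClosed F → AccPt x (𝓟 F) → x ∈ F := by
    intro F x hF h
    rw [accPt_principal_iff_clusterPt] at h
    have hx : x ∈ closure (F \ {x}) := mem_closure_iff_clusterPt.mpr h
    have : x ∈ closure F := closure_mono Set.diff_subset hx
    rwa [hF.closure_eq] at this
  -- Closed sets disjoint from A are finite.
  have keyA : ∀ F : Set X, IsClosed F → (∀ a ∈ A, a ∉ F) → F.Finite := by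
    intro F hF h
    by_contra hinf
    obtain ⟨a, haA, ha⟩ := (hlim F hinf).1
    exact h a haA (hacc_mem F a hF ha)
  -- Closed sets disjoint from B are finite.
  have keyB : ∀ F : Set X, IsClosed F → (∀ b ∈ B, b ∉ F) → F.Finite := by
    intro F hF h
    by_contra hinf
    obtain ⟨b, hbB, hb⟩ := (hlim F hinf).2
    exact h b hbB (hacc_mem F b hF hb)
  -- Well-order A, reverse well-order the complement of A.
  letI L1 : LinearOrder ↥A := linearOrderOfSTO WellOrderingRel
  letI L2 : LinearOrder ↥(Aᶜ) := linearOrderOfSTO WellOrderingRel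
  let e : X → ↥A ⊕ₗ (↥(Aᶜ))ᵒᵈ := fun x =>
    if h : x ∈ A then toLex (Sum.inl ⟨x, h⟩)
    else toLex (Sum.inr (OrderDual.toDual ⟨x, h⟩))
  have eA : ∀ x (h : x ∈ A), e x = toLex (Sum.inl ⟨x, h⟩) := fun x h => dif_pos h
  have eC : ∀ x (h : x ∉ A), e x = toLex (Sum.inr (OrderDual.toDual ⟨x, h⟩)) :=
    fun x h => dif_neg h
  have einj : Function.Injective e := by
    intro x y hxy
    by_cases hx : x ∈ A <;> by_cases hy : y ∈ A <;>
      simp only [eA, eC, hx, hy, e, dif_pos, dif_neg, not_false_iff] at hxy <;>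
      first
        | exact congrArg Subtype.val (Sum.inl.inj (toLex.injective hxy))
        | exact congrArg Subtype.val (Sum.inr.inj (toLex.injective hxy))
        | cases Sum.inl_ne_inr (toLex.injective hxy)
        | cases Sum.inr_ne_inl (toLex.injective hxy)
  have wfA : WellFounded (WellOrderingRel : ↥A → ↥A → Prop) := IsWellFounded.wf
  have wfC : WellFounded (WellOrderingRel : ↥(Aᶜ) → ↥(Aᶜ) → Prop) := IsWellFounded.wf
  -- r a x for a ∈ A, x ∉ A
  have rAC : ∀ a ∈ A, ∀ x ∈ Aᶜ, e a ≤ e x := by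
    intro a ha x hx
    rw [eA a ha, eC x hx]
    exact Sum.Lex.inl_le_inr _ _
  -- every nonempty subset of A has a least element
  have minA : ∀ S : Set X, S ⊆ A → S.Nonempty → ∃ a ∈ S, ∀ x ∈ S, e a ≤ e x := by
    intro S hS hSne
    obtain ⟨s, hs⟩ := hSne
    set T : Set ↥A := {a : ↥A | ↑a ∈ S} with hT
    have hTne : T.Nonempty := ⟨⟨s, hS hs⟩, hs⟩
    let m := wfA.min T hTne
    have hmT : m ∈ T := wfA.min_mem T hTne
    have hmmin : ∀ x ∈ T, ¬ WellOrderingRel x m := fun x hx => wfA.not_lt_min T hx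
    refine ⟨↑m, hmT, fun x hx => ?_⟩
    have hxA : x ∈ A := hS hx
    rw [eA _ m.2, eA x hxA]
    rw [Sum.Lex.inl_le_inl_iff]
    have : ¬ ((⟨x, hxA⟩ : ↥A) < m) := hmmin ⟨x, hxA⟩ hx
    simpa using not_lt.mp this
  -- every nonempty subset of Aᶜ has a greatest element
  have maxC : ∀ S : Set X, S ⊆ Aᶜ → S.Nonempty → ∃ b ∈ S, ∀ x ∈ S, e x ≤ e b := by
    intro S hS hSne
    obtain ⟨s, hs⟩ := hSne
    set T : Set ↥(Aᶜ) := {a : ↥(Aᶜ) | ↑a ∈ S} with hT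
    have hTne : T.Nonempty := ⟨⟨s, hS hs⟩, hs⟩
    let m := wfC.min T hTne
    have hmT : m ∈ T := wfC.min_mem T hTne
    have hmmin : ∀ x ∈ T, ¬ WellOrderingRel x m := fun x hx => wfC.not_lt_min T hx
    refine ⟨↑m, hmT, fun x hx => ?_⟩
    have hxC : x ∈ Aᶜ := hS hx
    rw [eC _ m.2, eC x hxC]
    rw [Sum.Lex.inr_le_inr_iff]
    have : ¬ ((⟨x, hxC⟩ : ↥(Aᶜ)) < m) := hmmin ⟨x, hxC⟩ hx
    exact OrderDual.toDual_le_toDual.mpr (not_lt.mp this)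
  refine ⟨fun x y => e x ≤ e y, ?_, rAC, minA, maxC, ?_⟩
  · exact { refl := fun x => le_refl _
            trans := fun a b c hab hbc => le_trans hab hbc
            antisymm := fun a b h1 h2 => einj (le_antisymm h1 h2)
            total := fun a b => le_total _ _ }
  · intro F hF hFne
    constructor
    · -- least element
      rcases (F ∩ A).eq_empty_or_nonempty with hFA | hFA
      · -- F is disjoint from A, hence finite
        have hfin : F.Finite := keyA F hF (by
          intro a ha haF
          exact Set.eq_empty_iff_forall_notMem.mp hFA a ⟨haF, ha⟩)
        exact Set.exists_min_image F e hfin hFne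
      · obtain ⟨a, haFA, hamin⟩ := minA (F ∩ A) Set.inter_subset_right hFA
        refine ⟨a, haFA.1, fun x hx => ?_⟩
        by_cases hxA : x ∈ A
        · exact hamin x ⟨hx, hxA⟩
        · exact rAC a haFA.2 x hxA
    · -- greatest element
      rcases (F ∩ Aᶜ).eq_empty_or_nonempty with hFC | hFC
      · -- F ⊆ A, hence disjoint from B, hence finite
        have hFsubA : F ⊆ A := by
          intro x hx
          by_contra hxA
          exact Set.eq_empty_iff_forall_notMem.mp hFC x ⟨hx, hxA⟩
        have hfin : F.Finite := keyB F hF (by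
          intro b hb hbF
          exact hdisj.ne_of_mem (hFsubA hbF) hb rfl)
        exact Set.exists_max_image F e hfin hFne
      · obtain ⟨b, hbFC, hbmax⟩ := maxC (F ∩ Aᶜ) Set.inter_subset_right hFC
        refine ⟨b, hbFC.1, fun x hx => ?_⟩
        by_cases hxA : x ∈ A
        · exact rAC x hxA b hbFC.2
        · exact hbmax x ⟨hx, hxA⟩
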